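/- arXiv:1608.01445 — 8 statements merged into one kernel-verified Lean document; each statement's English description precedes it below -/
import Mathlib

section
/- Let k ≥ 1, let G be a minimally k-matchable graph, and let x be a vertex of G of degree d := deg_G(x) ≥ 2. Then (d − 1) · |𝔐(G)| ≤ d · (k − 1), i.e., |𝔐(G)| ≤ (d/(d−1)) · (k − 1). -/
open SimpleGraph

/-- `M` is a perfect matching of the graph `G`, viewed as a set of edges:
every vertex is an endvertex of exactly one member of `M`. -/
def IsPerfMatching {V : Type*} (G : SimpleGraph V) (M : Set (Sym2 V)) : Prop :=
  M ⊆ G.edgeSet ∧ ∀ v : V, ∃! e, e ∈ M ∧ v ∈ e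

/-- The number of perfect matchings of `G`. -/
noncomputable def numPM {V : Type*} (G : SimpleGraph V) : ℕ :=
  {M : Set (Sym2 V) | IsPerfMatching G M}.ncard

/-- `G` is `k`-matchable: it has at least `k` perfect matchings. -/
def Matchable {V : Type*} (k : ℕ) (G : SimpleGraph V) : Prop :=
  k ≤ numPM G

/-- `G` is minimally `k`-matchable. -/
def MinMatchable {V : Type*} (k : ℕ) (G : SimpleGraph V) : Prop :=
  Matchable k G ∧ ∀ e ∈ G.edgeSet, ¬ Matchable k (G.deleteEdges {e})

/-- `H` is an odd subdivision of `G`: every edge of `G` is replaced by a path of odd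
length connecting its endvertices, all these paths pairwise internally disjoint. -/
def IsOddSubdivisionOf {W V : Type*} (H : SimpleGraph W) (G : SimpleGraph V) : Prop :=
  ∃ (f : V ↪ W) (P : ∀ u v : V, G.Adj u v → H.Walk (f u) (f v)),
    (∀ u v (h : G.Adj u v), P v u h.symm = (P u v h).reverse) ∧
    (∀ u v (h : G.Adj u v), (P u v h).IsPath) ∧
    (∀ u v (h : G.Adj u v), Odd (P u v h).length) ∧
    (∀ u v (h : G.Adj u v), ∀ w ∈ (P u v h).support,
        (∃ x, w = f x) → w = f u ∨ w = f v) ∧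
    (∀ u v (h : G.Adj u v) u' v' (h' : G.Adj u' v'), s(u, v) ≠ s(u', v') →
        ∀ w, w ∈ (P u v h).support → w ∈ (P u' v' h').support → ∃ x, w = f x) ∧
    (∀ w : W, (∃ x, w = f x) ∨ ∃ (u v : _) (h : G.Adj u v), w ∈ (P u v h).support) ∧
    (∀ e ∈ H.edgeSet, ∃ (u v : _) (h : G.Adj u v), e ∈ (P u v h).edges)

/-- `G` is the disjoint union of an odd subdivision of `H` and any number (possibly zero)
of vertex-disjoint copies of `K₂`: there is a set `A` of vertices such that no edge of `G`
joins `A` to its complement, every vertex outside `A` has exactly one neighbour (these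
vertices span the copies of `K₂`), and the subgraph induced on `A` is an odd subdivision
of `H`. -/
def IsOddSubdivPlusK2 {W V : Type*} (H : SimpleGraph W) (G : SimpleGraph V) : Prop :=
  ∃ A : Set V,
    (∀ e ∈ G.edgeSet, (∀ v ∈ e, v ∈ A) ∨ (∀ v ∈ e, v ∉ A)) ∧
    (∀ v : V, v ∉ A → ∃! w, G.Adj v w) ∧
    IsOddSubdivisionOf (G.induce A) H

/-- **Lemma 1 (first part).** If `G` is minimally `k`-matchable and `x` is a vertex of degree
`d ≥ 2`, then `(d - 1) * |𝔐(G)| ≤ d * (k - 1)`. -/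
theorem numPM_le_of_minMatchable (k : ℕ) (hk : 1 ≤ k) {V : Type} [Fintype V]
    (G : SimpleGraph V) [DecidableRel G.Adj] (hG : MinMatchable k G)
    (x : V) (hd : 2 ≤ G.degree x) :
    (G.degree x - 1) * numPM G ≤ G.degree x * (k - 1) := by
  classical
  set d := G.degree x with hdd
  have hfin : {M : Set (Sym2 V) | IsPerfMatching G M}.Finite := Set.toFinite _
  set 𝓜 : Finset (Set (Sym2 V)) := hfin.toFinset with h𝓜
  have hmem : ∀ M, M ∈ 𝓜 ↔ IsPerfMatching G M := by
    intro M; simp [h𝓜, Set.Finite.mem_toFinset]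
  have hn : numPM G = 𝓜.card := by
    rw [numPM, Set.ncard_eq_toFinset_card _ hfin]
  set I : Finset (Sym2 V) := G.incidenceFinset x with hI
  have hImem : ∀ e, e ∈ I ↔ e ∈ G.edgeSet ∧ x ∈ e := by
    intro e
    simp [hI, SimpleGraph.mem_incidenceFinset, SimpleGraph.incidenceSet]
  have hIcard : I.card = d := by
    rw [hI, SimpleGraph.card_incidenceFinset_eq_degree]
  -- the function picking the unique matching edge at x
  set φ : Set (Sym2 V) → Sym2 V :=
    fun M => if h : ∃ e, e ∈ M ∧ x ∈ e then h.choose else s(x, x) with hφ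
  have hφ1 : ∀ M ∈ 𝓜, φ M ∈ M ∧ x ∈ φ M := by
    intro M hM
    obtain ⟨hsub, hU⟩ := (hmem M).1 hM
    obtain ⟨e, he, _⟩ := hU x
    have h : ∃ e, e ∈ M ∧ x ∈ e := ⟨e, he⟩
    simpa [hφ, h] using h.choose_spec
  have hφI : ∀ M ∈ 𝓜, φ M ∈ I := by
    intro M hM
    obtain ⟨h1, h2⟩ := hφ1 M hM
    exact (hImem _).2 ⟨((hmem M).1 hM).1 h1, h2⟩
  have hφeq : ∀ M ∈ 𝓜, ∀ e ∈ I, (φ M = e ↔ e ∈ M) := by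
    intro M hM e heI
    obtain ⟨hsub, hU⟩ := (hmem M).1 hM
    obtain ⟨f, hf, huniq⟩ := hU x
    constructor
    · rintro rfl; exact (hφ1 M hM).1
    · intro heM
      have h1 := huniq _ ⟨heM, ((hImem e).1 heI).2⟩
      have h2 := huniq _ (hφ1 M hM)
      rw [h2, h1]
  -- double counting
  have hcount : 𝓜.card = ∑ e ∈ I, (𝓜.filter fun M => e ∈ M).card := by
    rw [Finset.card_eq_sum_card_fiberwise hφI]
    refine Finset.sum_congr rfl fun e he => ?_
    congr 1
    exact Finset.filter_congr fun M hM => hφeq M hM e he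
  -- deleted-edge bound
  have hdel : ∀ e ∈ I, (𝓜.filter fun M => e ∉ M).card ≤ k - 1 := by
    intro e heI
    have heE : e ∈ G.edgeSet := ((hImem e).1 heI).1
    have hlt : numPM (G.deleteEdges {e}) < k := by
      have := hG.2 e heE
      unfold Matchable at this
      omega
    have hset : {M : Set (Sym2 V) | IsPerfMatching (G.deleteEdges {e}) M}
        = ↑(𝓜.filter fun M => e ∉ M) := by
      ext M
      simp only [Set.mem_setOf_eq, Finset.coe_filter, Set.mem_setOf_eq, hmem]
      constructor
      · rintro ⟨hsub, hU⟩
        have hsub' : M ⊆ G.edgeSet := fun f hf => by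
          have := hsub hf
          rw [SimpleGraph.edgeSet_deleteEdges] at this
          exact this.1
        refine ⟨⟨hsub', hU⟩, fun heM => ?_⟩
        have := hsub heM
        rw [SimpleGraph.edgeSet_deleteEdges] at this
        exact this.2 rfl
      · rintro ⟨⟨hsub, hU⟩, heM⟩
        refine ⟨fun f hf => ?_, hU⟩
        rw [SimpleGraph.edgeSet_deleteEdges]
        exact ⟨hsub hf, fun hfe => heM (hfe ▸ hf)⟩
    have : numPM (G.deleteEdges {e}) = (𝓜.filter fun M => e ∉ M).card := by
      rw [numPM, hset, Set.ncard_coe_finset]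
    omega
  -- put it together
  have hsplit : ∀ e ∈ I, (𝓜.filter fun M => e ∈ M).card
      + (𝓜.filter fun M => e ∉ M).card = 𝓜.card := by
    intro e _
    exact Finset.card_filter_add_card_filter_not _
  have hsum : d * 𝓜.card = 𝓜.card + ∑ e ∈ I, (𝓜.filter fun M => e ∉ M).card := by
    calc d * 𝓜.card = ∑ _e ∈ I, 𝓜.card := by rw [Finset.sum_const, smul_eq_mul, hIcard]
    _ = ∑ e ∈ I, ((𝓜.filter fun M => e ∈ M).card + (𝓜.filter fun M => e ∉ M).card) :=
        Finset.sum_congr rfl fun e he => (hsplit e he).symm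
    _ = _ := by rw [Finset.sum_add_distrib, ← hcount]
  have hsum2 : ∑ e ∈ I, (𝓜.filter fun M => e ∉ M).card ≤ d * (k - 1) := by
    calc ∑ e ∈ I, (𝓜.filter fun M => e ∉ M).card ≤ ∑ _e ∈ I, (k - 1) :=
      Finset.sum_le_sum hdel
    _ = d * (k - 1) := by rw [Finset.sum_const, smul_eq_mul, hIcard]
  rw [hn, Nat.sub_one_mul]
  omega
end

section
/- Let k ≥ 1 and let G be a minimally k-matchable graph containing at least one vertex of degree at least 2. Then |𝔐(G)| ≤ 2k − 2. -/
open SimpleGraph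

/-- **Lemma 1 (second part).** If `G` is minimally `k`-matchable and has a vertex of degree
at least `2`, then `|𝔐(G)| ≤ 2k - 2`. -/
theorem numPM_le_two_k_sub_two (k : ℕ) (hk : 1 ≤ k) {V : Type} [Fintype V]
    (G : SimpleGraph V) [DecidableRel G.Adj] (hG : MinMatchable k G)
    (h : ∃ x : V, 2 ≤ G.degree x) :
    numPM G ≤ 2 * k - 2 := by
  classical
  obtain ⟨x, hx⟩ := h
  have h2 : 1 < (G.neighborFinset x).card := by
    rw [G.card_neighborFinset_eq_degree]; omega
  obtain ⟨y, hy, z, hz, hyz⟩ := Finset.one_lt_card.mp h2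
  rw [SimpleGraph.mem_neighborFinset] at hy hz
  set e1 : Sym2 V := s(x, y) with he1def
  set e2 : Sym2 V := s(x, z) with he2def
  have he1 : e1 ∈ G.edgeSet := hy
  have he2 : e2 ∈ G.edgeSet := hz
  have he12 : e1 ≠ e2 := by
    exact fun hc => hyz (Sym2.congr_right.mp hc)
  have hdel : ∀ (e : Sym2 V) (M : Set (Sym2 V)),
      IsPerfMatching (G.deleteEdges {e}) M ↔ IsPerfMatching G M ∧ e ∉ M := by
    intro e M
    unfold IsPerfMatching
    rw [SimpleGraph.edgeSet_deleteEdges]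
    constructor
    · rintro ⟨hsub, hu⟩
      refine ⟨⟨fun a ha => (hsub ha).1, hu⟩, fun hemem => (hsub hemem).2 rfl⟩
    · rintro ⟨⟨hsub, hu⟩, hnot⟩
      refine ⟨fun a ha => ⟨hsub ha, ?_⟩, hu⟩
      rintro rfl; exact hnot ha
  set S1 : Set (Set (Sym2 V)) := {M | IsPerfMatching (G.deleteEdges {e1}) M}
  set S2 : Set (Set (Sym2 V)) := {M | IsPerfMatching (G.deleteEdges {e2}) M}
  have hsub : {M : Set (Sym2 V) | IsPerfMatching G M} ⊆ S1 ∪ S2 := by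
    intro M hM
    by_cases h1 : e1 ∈ M
    · right
      rw [Set.mem_setOf_eq, hdel]
      refine ⟨hM, fun h2' => ?_⟩
      obtain ⟨e, -, hu⟩ := hM.2 x
      have hx1 : e1 ∈ M ∧ x ∈ e1 := ⟨h1, by simp [he1def]⟩
      have hx2 : e2 ∈ M ∧ x ∈ e2 := ⟨h2', by simp [he2def]⟩
      exact he12 ((hu e1 hx1).trans (hu e2 hx2).symm)
    · left
      rw [Set.mem_setOf_eq, hdel]
      exact ⟨hM, h1⟩
  have hk1 : S1.ncard ≤ k - 1 := by
    have h' := hG.2 e1 he1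
    unfold Matchable at h'
    have heq : numPM (G.deleteEdges {e1}) = S1.ncard := rfl
    omega
  have hk2 : S2.ncard ≤ k - 1 := by
    have h' := hG.2 e2 he2
    unfold Matchable at h'
    have heq : numPM (G.deleteEdges {e2}) = S2.ncard := rfl
    omega
  calc numPM G ≤ (S1 ∪ S2).ncard :=
        Set.ncard_le_ncard hsub (Set.toFinite _)
    _ ≤ S1.ncard + S2.ncard := Set.ncard_union_le _ _
    _ ≤ 2 * k - 2 := by omega
end

section
/- Let k ≥ 1 and let G be a minimally k-matchable graph. Then every vertex of G has degree at most k, i.e., the maximum degree satisfies Δ(G) ≤ k. -/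
open SimpleGraph

lemma exists_pm_mem {V : Type} [Finite V] {G : SimpleGraph V} {k : ℕ}
    (hG : MinMatchable k G) {e : Sym2 V} (he : e ∈ G.edgeSet) :
    ∃ M, IsPerfMatching G M ∧ e ∈ M := by
  by_contra h
  push_neg at h
  apply hG.2 e he
  refine le_trans hG.1 (Set.ncard_le_ncard ?_ (Set.toFinite _))
  intro M hM
  refine ⟨?_, hM.2⟩
  intro f hf
  rw [SimpleGraph.edgeSet_deleteEdges]
  exact ⟨hM.1 hf, fun hfe => h M hM (by simpa using hfe ▸ hf)⟩

/-- **Lemma 1 (third part).** If `G` is minimally `k`-matchable, then every vertex of `G`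
has degree at most `k`; in particular the maximum degree of `G` is at most `k`. -/
theorem degree_le_of_minMatchable (k : ℕ) (hk : 1 ≤ k) {V : Type} [Fintype V]
    (G : SimpleGraph V) [DecidableRel G.Adj] (hG : MinMatchable k G) :
    (∀ x : V, G.degree x ≤ k) ∧ G.maxDegree ≤ k := by
  have hdeg : ∀ x : V, G.degree x ≤ k := by
    intro x
    by_contra hx
    push_neg at hx
    -- pick a neighbor y0
    have hpos : 0 < (G.neighborFinset x).card := by
      rw [G.card_neighborFinset_eq_degree]; omega
    obtain ⟨y0, hy0⟩ := Finset.card_pos.mp hpos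
    have hadj0 : G.Adj x y0 := (SimpleGraph.mem_neighborFinset G x y0).mp hy0
    set e0 : Sym2 V := s(x, y0) with he0def
    have he0 : e0 ∈ G.edgeSet := hadj0
    apply hG.2 e0 he0
    -- for each other neighbor, choose a perfect matching containing the edge
    classical
    have key : ∀ y : V, G.Adj x y → ∃ M, IsPerfMatching G M ∧ s(x, y) ∈ M :=
      fun y hy => exists_pm_mem hG hy
    set f : V → Set (Sym2 V) := fun y =>
      if h : G.Adj x y then (key y h).choose else ∅ with hfdef
    have hf : ∀ y (h : G.Adj x y), IsPerfMatching G (f y) ∧ s(x, y) ∈ f y := by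
      intro y h
      simp only [hfdef, dif_pos h]
      exact (key y h).choose_spec
    set s : Set V := ↑(G.neighborFinset x \ {y0}) with hsdef
    have hcard : s.ncard = G.degree x - 1 := by
      rw [hsdef, Set.ncard_coe_finset, Finset.card_sdiff_of_subset (by simpa using hy0)]
      simp
    have hmaps : ∀ y ∈ s, f y ∈ {M : Set (Sym2 V) | IsPerfMatching (G.deleteEdges {e0}) M} := by
      intro y hy
      simp only [hsdef, Finset.coe_sdiff, Set.mem_diff, Finset.mem_coe,
        SimpleGraph.mem_neighborFinset, Finset.coe_singleton, Set.mem_singleton_iff] at hy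
      obtain ⟨hadj, hne⟩ := hy
      obtain ⟨hM, hmem⟩ := hf y hadj
      refine ⟨?_, hM.2⟩
      intro g hg
      rw [SimpleGraph.edgeSet_deleteEdges]
      refine ⟨hM.1 hg, ?_⟩
      simp only [Set.mem_singleton_iff]
      rintro rfl
      -- e0 and s(x,y) are both in f y and contain x; uniqueness forces them equal
      have := (hM.2 x).unique ⟨hg, by simp [he0def]⟩ ⟨hmem, by simp⟩
      rw [he0def, Sym2.eq_iff] at this
      rcases this with ⟨-, h2⟩ | ⟨h1, -⟩
      · exact hne h2.symm
      · exact G.ne_of_adj hadj h1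
    have hinj : Set.InjOn f s := by
      intro y hy y' hy' hfy
      simp only [hsdef, Finset.coe_sdiff, Set.mem_diff, Finset.mem_coe,
        SimpleGraph.mem_neighborFinset] at hy hy'
      obtain ⟨hM, hmem⟩ := hf y hy.1
      obtain ⟨hM', hmem'⟩ := hf y' hy'.1
      rw [hfy] at hmem
      have := (hM'.2 x).unique ⟨hmem, by simp⟩ ⟨hmem', by simp⟩
      rw [Sym2.eq_iff] at this
      rcases this with ⟨-, h2⟩ | ⟨h1, -⟩
      · exact h2
      · exact absurd h1 (G.ne_of_adj hy'.1)
    have := Set.ncard_le_ncard_of_injOn f hmaps hinj (Set.toFinite _)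
    unfold Matchable numPM
    omega
  exact ⟨hdeg, G.maxDegree_le_of_forall_degree_le k hdeg⟩
end

section
/- Let k ≥ 1 and let G be a minimally k-matchable graph. Then every vertex of G has degree at most |𝔐(G)|, the number of perfect matchings of G. -/
open SimpleGraph

/-- If `G` is minimally `k`-matchable, then every vertex of `G` has degree at most
`|𝔐(G)|`, the number of perfect matchings of `G`. -/
theorem degree_le_numPM_of_minMatchable (k : ℕ) (hk : 1 ≤ k) {V : Type} [Fintype V]
    (G : SimpleGraph V) [DecidableRel G.Adj] (hG : MinMatchable k G) :
    ∀ x : V, G.degree x ≤ numPM G := by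
  classical
  intro x
  have key : ∀ e ∈ G.edgeSet, ∃ M, IsPerfMatching G M ∧ e ∈ M := by
    intro e he
    by_contra h
    push_neg at h
    apply hG.2 e he
    refine le_trans hG.1 (Set.ncard_le_ncard ?_ (Set.toFinite _))
    intro M hM
    refine ⟨?_, hM.2⟩
    intro f hf
    rw [SimpleGraph.edgeSet_deleteEdges]
    exact ⟨hM.1 hf, fun hfe => h M hM (by simpa using hfe ▸ hf)⟩
  choose F hF1 hF2 using key
  have hdeg : G.degree x = (G.incidenceSet x).ncard := by
    rw [← G.card_incidenceSet_eq_degree (v := x), Set.ncard_eq_toFinset_card']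
    simp
  rw [hdeg]
  apply Set.ncard_le_ncard_of_injOn
    (fun e => if he : e ∈ G.edgeSet then F e he else ∅)
  · intro e he
    simp only [Set.mem_setOf_eq]
    rw [dif_pos he.1]
    exact hF1 e he.1
  · intro e he e' he' hfe
    simp only at hfe
    rw [dif_pos he.1, dif_pos he'.1] at hfe
    have h1 := hF2 e he.1
    have h2 := hF2 e' he'.1
    rw [hfe] at h1
    have huniq := (hF1 e' he'.1).2 x
    obtain ⟨f, -, hu⟩ := huniq
    rw [hu e ⟨h1, he.2⟩, hu e' ⟨h2, he'.2⟩]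
end

section
/- Let H be a graph with an edge wz, and let G be obtained from H by deleting the edge wz and adding two new vertices x, y together with the edges wx, xy, yz (i.e., wz is replaced by a path w–x–y–z of length 3). Then the map ψ defined by ψ(M) := (M \ {wz}) ∪ {wx, yz} if wz ∈ M, and ψ(M) := M ∪ {xy} if wz ∉ M, is a bijection from 𝔐(H) onto 𝔐(G); in particular |𝔐(G)| = |𝔐(H)|. -/
open SimpleGraph

/-- The graph obtained from `H` by deleting the edge `wz` and adding two new vertices
`x := .inr 0` and `y := .inr 1` together with the edges `wx`, `xy`, `yz`
(i.e. `wz` is replaced by a path `w–x–y–z` of length 3). -/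
def replaceEdgeByPath3 {V : Type*} (H : SimpleGraph V) (w z : V) :
    SimpleGraph (V ⊕ Fin 2) :=
  SimpleGraph.fromRel fun a b =>
    (∃ a' b', a = Sum.inl a' ∧ b = Sum.inl b' ∧ H.Adj a' b' ∧ s(a', b') ≠ s(w, z)) ∨
    (a = Sum.inl w ∧ b = Sum.inr 0) ∨
    (a = Sum.inr 0 ∧ b = Sum.inr 1) ∨
    (a = Sum.inr 1 ∧ b = Sum.inl z)

/-- The map `ψ` of Lemma 2: `ψ(M) := (M \ {wz}) ∪ {wx, yz}` if `wz ∈ M`, and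
`ψ(M) := M ∪ {xy}` if `wz ∉ M` (edges of `M` transported along the inclusion `Sum.inl`). -/
noncomputable def psiPath3 {V : Type*} (w z : V) (M : Set (Sym2 V)) :
    Set (Sym2 (V ⊕ Fin 2)) := by
  classical
  exact if s(w, z) ∈ M then
      (Sym2.map Sum.inl '' (M \ {s(w, z)})) ∪
        {s(Sum.inl w, Sum.inr 0), s(Sum.inr 1, Sum.inl z)}
    else (Sym2.map Sum.inl '' M) ∪ {s(Sum.inr 0, Sum.inr 1)}

section PsiHelpers
open Sum

variable {V : Type} {H : SimpleGraph V} {w z : V}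

lemma rep_edge_iff (e : Sym2 (V ⊕ Fin 2)) :
    e ∈ (replaceEdgeByPath3 H w z).edgeSet ↔
      (∃ a' b', H.Adj a' b' ∧ s(a', b') ≠ s(w, z) ∧ e = s(Sum.inl a', Sum.inl b')) ∨
      e = s(Sum.inl w, Sum.inr 0) ∨ e = s(Sum.inr 0, Sum.inr 1) ∨
      e = s(Sum.inr 1, Sum.inl z) := by
  induction e using Sym2.ind with
  | _ a b =>
    rw [SimpleGraph.mem_edgeSet]
    show (SimpleGraph.fromRel _).Adj a b ↔ _
    rw [fromRel_adj]
    constructor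
    · rintro ⟨hab, h | h⟩ <;>
      · rcases h with ⟨a', b', rfl, rfl, h1, h2⟩ | ⟨rfl, rfl⟩ | ⟨rfl, rfl⟩ | ⟨rfl, rfl⟩ <;>
        simp_all [Sym2.eq_iff] <;> aesop
    · rintro (⟨a', b', h1, h2, he⟩ | he | he | he) <;>
      rw [Sym2.eq_iff] at he <;>
      rcases he with ⟨rfl, rfl⟩ | ⟨rfl, rfl⟩ <;>
      (try have h3 : a' ≠ b' := h1.ne) <;> simp_all [Sym2.eq_swap] <;>
      first
      | exact fun h => h1.ne (Sum.inl_injective h)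
      | exact h1.ne (by assumption)
      | exact h1.ne' (by assumption)
      | tauto

lemma psiPath3_pos {M : Set (Sym2 V)} (h : s(w, z) ∈ M) :
    psiPath3 w z M = (Sym2.map Sum.inl '' (M \ {s(w, z)})) ∪
      {s(Sum.inl w, Sum.inr 0), s(Sum.inr 1, Sum.inl z)} := by
  unfold psiPath3; rw [if_pos h]

lemma psiPath3_neg {M : Set (Sym2 V)} (h : s(w, z) ∉ M) :
    psiPath3 w z M = (Sym2.map Sum.inl '' M) ∪ {s(Sum.inr 0, Sum.inr 1)} := by
  unfold psiPath3; rw [if_neg h]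

lemma mem_map_inl {a : V} {e : Sym2 V} :
    Sum.inl a ∈ Sym2.map (Sum.inl : V → V ⊕ Fin 2) e ↔ a ∈ e := by
  rw [Sym2.mem_map]
  constructor
  · rintro ⟨b, hb, h⟩; cases Sum.inl_injective h; exact hb
  · intro h; exact ⟨a, h, rfl⟩

lemma inr_not_mem_map {c : Fin 2} {e : Sym2 V} :
    Sum.inr c ∉ Sym2.map (Sum.inl : V → V ⊕ Fin 2) e := by
  rw [Sym2.mem_map]; rintro ⟨b, _, h⟩; exact Sum.inl_ne_inr h

lemma psi_isPM (hwz : H.Adj w z) {M : Set (Sym2 V)} (hM : IsPerfMatching H M) :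
    IsPerfMatching (replaceEdgeByPath3 H w z) (psiPath3 w z M) := by
  obtain ⟨hsub, huniq⟩ := hM
  by_cases hc : s(w, z) ∈ M
  · rw [psiPath3_pos hc]
    constructor
    · rintro e (⟨e', ⟨he'M, hne⟩, rfl⟩ | he)
      · induction e' using Sym2.ind with
        | _ a b =>
          rw [rep_edge_iff]
          exact Or.inl ⟨a, b, H.mem_edgeSet.mp (hsub he'M), by simpa using hne,
            by simp [Sym2.map_pair_eq]⟩
      · rw [rep_edge_iff]
        rcases he with rfl | rfl
        · exact Or.inr (Or.inl rfl)
        · exact Or.inr (Or.inr (Or.inr rfl))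
    · intro v
      cases v with
      | inl a =>
        rcases eq_or_ne a w with rfl | haw
        · refine ⟨s(Sum.inl a, Sum.inr 0),
            ⟨Set.mem_union_right _ (by simp), by simp⟩, ?_⟩
          rintro f ⟨hf, hwf⟩
          rcases hf with ⟨e', ⟨he'M, hne⟩, rfl⟩ | hf
          · exfalso
            rw [mem_map_inl] at hwf
            obtain ⟨e₀, he₀, hu⟩ := huniq a
            have h1 := hu e' ⟨he'M, hwf⟩
            have h2 := hu s(a, z) ⟨hc, by simp⟩
            exact absurd (h1.trans h2.symm) (by simpa using hne)
          · simp only [Set.mem_insert_iff, Set.mem_singleton_iff] at hf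
            rcases hf with rfl | rfl
            · rfl
            · exfalso
              simp only [Sym2.mem_iff] at hwf
              rcases hwf with h | h
              · exact Sum.inl_ne_inr h
              · exact hwz.ne (Sum.inl_injective h)
        rcases eq_or_ne a z with rfl | haz
        · refine ⟨s(Sum.inr 1, Sum.inl a),
            ⟨Set.mem_union_right _ (by simp), by simp⟩, ?_⟩
          rintro f ⟨hf, hzf⟩
          rcases hf with ⟨e', ⟨he'M, hne⟩, rfl⟩ | hf
          · exfalso
            rw [mem_map_inl] at hzf
            obtain ⟨e₀, he₀, hu⟩ := huniq a
            have h1 := hu e' ⟨he'M, hzf⟩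
            have h2 := hu s(w, a) ⟨hc, by simp⟩
            exact absurd (h1.trans h2.symm) (by simpa using hne)
          · simp only [Set.mem_insert_iff, Set.mem_singleton_iff] at hf
            rcases hf with rfl | rfl
            · exfalso
              simp only [Sym2.mem_iff] at hzf
              rcases hzf with h | h
              · exact haw (Sum.inl_injective h)
              · exact Sum.inl_ne_inr h
            · rfl
        · obtain ⟨e₀, ⟨he₀M, hae₀⟩, hu⟩ := huniq a
          have hne₀ : e₀ ≠ s(w, z) := by
            rintro rfl
            rw [Sym2.mem_iff] at hae₀
            tauto
          refine ⟨Sym2.map Sum.inl e₀,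
            ⟨Set.mem_union_left _ ⟨e₀, ⟨he₀M, by simpa using hne₀⟩, rfl⟩,
              mem_map_inl.mpr hae₀⟩, ?_⟩
          rintro f ⟨hf, haf⟩
          rcases hf with ⟨e', ⟨he'M, hne'⟩, rfl⟩ | hf
          · rw [mem_map_inl] at haf
            rw [hu e' ⟨he'M, haf⟩]
          · exfalso
            simp only [Set.mem_insert_iff, Set.mem_singleton_iff] at hf
            rcases hf with rfl | rfl <;> simp only [Sym2.mem_iff] at haf <;>
              rcases haf with h | h
            · exact haw (Sum.inl_injective h)
            · exact Sum.inl_ne_inr h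
            · exact Sum.inl_ne_inr h
            · exact haz (Sum.inl_injective h)
      | inr c =>
        fin_cases c
        · refine ⟨s(Sum.inl w, Sum.inr 0),
            ⟨Set.mem_union_right _ (by simp), by simp⟩, ?_⟩
          rintro f ⟨hf, hcf⟩
          rcases hf with ⟨e', _, rfl⟩ | hf
          · exact absurd hcf inr_not_mem_map
          · simp only [Set.mem_insert_iff, Set.mem_singleton_iff] at hf
            rcases hf with rfl | rfl
            · rfl
            · exfalso
              simp only [Sym2.mem_iff] at hcf
              rcases hcf with h | h
              · exact absurd (Sum.inr_injective h) (by decide)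
              · exact Sum.inr_ne_inl h
        · refine ⟨s(Sum.inr 1, Sum.inl z),
            ⟨Set.mem_union_right _ (by simp), by simp⟩, ?_⟩
          rintro f ⟨hf, hcf⟩
          rcases hf with ⟨e', _, rfl⟩ | hf
          · exact absurd hcf inr_not_mem_map
          · simp only [Set.mem_insert_iff, Set.mem_singleton_iff] at hf
            rcases hf with rfl | rfl
            · exfalso
              simp only [Sym2.mem_iff] at hcf
              rcases hcf with h | h
              · exact Sum.inr_ne_inl h
              · exact absurd (Sum.inr_injective h) (by decide)
            · rfl
  · rw [psiPath3_neg hc]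
    constructor
    · rintro e (⟨e', he'M, rfl⟩ | he)
      · induction e' using Sym2.ind with
        | _ a b =>
          rw [rep_edge_iff]
          exact Or.inl ⟨a, b, H.mem_edgeSet.mp (hsub he'M),
            fun h => hc (h ▸ he'M), by simp [Sym2.map_pair_eq]⟩
      · rw [rep_edge_iff]
        rw [Set.mem_singleton_iff] at he
        exact he ▸ Or.inr (Or.inr (Or.inl rfl))
    · intro v
      cases v with
      | inl a =>
        obtain ⟨e₀, ⟨he₀M, hae₀⟩, hu⟩ := huniq a
        refine ⟨Sym2.map Sum.inl e₀,
          ⟨Set.mem_union_left _ ⟨e₀, he₀M, rfl⟩, mem_map_inl.mpr hae₀⟩, ?_⟩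
        rintro f ⟨hf, haf⟩
        rcases hf with ⟨e', he'M, rfl⟩ | hf
        · rw [mem_map_inl] at haf
          rw [hu e' ⟨he'M, haf⟩]
        · exfalso
          rw [Set.mem_singleton_iff] at hf
          subst hf
          simp only [Sym2.mem_iff] at haf
          rcases haf with h | h <;> exact Sum.inl_ne_inr h
      | inr c =>
        have hx : s(Sum.inr 0, Sum.inr 1) ∈ (Sym2.map (Sum.inl : V → V ⊕ Fin 2) '' M) ∪
            {s(Sum.inr 0, Sum.inr 1)} := Set.mem_union_right _ rfl
        have huq : ∀ f ∈ (Sym2.map (Sum.inl : V → V ⊕ Fin 2) '' M) ∪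
            {s(Sum.inr 0, Sum.inr 1)}, Sum.inr c ∈ f → f = s(Sum.inr 0, Sum.inr 1) := by
          rintro f (⟨e', _, rfl⟩ | hf) hcf
          · exact absurd hcf inr_not_mem_map
          · exact hf
        fin_cases c
        · exact ⟨s(Sum.inr 0, Sum.inr 1), ⟨hx, by simp⟩, fun f ⟨hf, hcf⟩ => huq f hf hcf⟩
        · exact ⟨s(Sum.inr 0, Sum.inr 1), ⟨hx, by simp⟩, fun f ⟨hf, hcf⟩ => huq f hf hcf⟩

lemma map_inl_ne_wx (e : Sym2 V) :
    Sym2.map (Sum.inl : V → V ⊕ Fin 2) e ≠ s(Sum.inl w, Sum.inr 0) := fun h =>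
  inr_not_mem_map (e := e) (c := 0) (by rw [h]; simp)

lemma map_inl_ne_yz (e : Sym2 V) :
    Sym2.map (Sum.inl : V → V ⊕ Fin 2) e ≠ s(Sum.inr 1, Sum.inl z) := fun h =>
  inr_not_mem_map (e := e) (c := 1) (by rw [h]; simp)

lemma map_inl_ne_xy (e : Sym2 V) :
    Sym2.map (Sum.inl : V → V ⊕ Fin 2) e ≠ s(Sum.inr 0, Sum.inr 1) := fun h =>
  inr_not_mem_map (e := e) (c := 0) (by rw [h]; simp)

lemma union_pair_cancel {α : Type*} {A B P : Set α} (h : A ∪ P = B ∪ P)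
    (hA : Disjoint A P) (hB : Disjoint B P) : A = B := by
  calc A = A \ P := hA.sdiff_eq_left.symm
    _ = (A ∪ P) \ P := by rw [Set.union_diff_right]
    _ = (B ∪ P) \ P := by rw [h]
    _ = B \ P := by rw [Set.union_diff_right]
    _ = B := hB.sdiff_eq_left

lemma psiPath3_inj (hwz : w ≠ z) {M₁ M₂ : Set (Sym2 V)}
    (h : psiPath3 w z M₁ = psiPath3 w z M₂) : M₁ = M₂ := by
  have hinj := Sym2.map.injective (Sum.inl_injective : Function.Injective
    (Sum.inl : V → V ⊕ Fin 2))
  by_cases h₁ : s(w, z) ∈ M₁ <;> by_cases h₂ : s(w, z) ∈ M₂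
  · rw [psiPath3_pos h₁, psiPath3_pos h₂] at h
    have hd : ∀ S : Set (Sym2 V), Disjoint (Sym2.map (Sum.inl : V → V ⊕ Fin 2) '' S)
        {s(Sum.inl w, Sum.inr 0), s(Sum.inr 1, Sum.inl z)} := by
      intro S
      rw [Set.disjoint_left]
      rintro e ⟨e', _, rfl⟩ he
      simp only [Set.mem_insert_iff, Set.mem_singleton_iff] at he
      rcases he with he | he
      · exact map_inl_ne_wx e' he
      · exact map_inl_ne_yz e' he
    have himg := union_pair_cancel h (hd _) (hd _)
    have hdiff : M₁ \ {s(w, z)} = M₂ \ {s(w, z)} :=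
      Set.image_injective.mpr hinj himg
    calc M₁ = insert s(w, z) (M₁ \ {s(w, z)}) := by
          rw [Set.insert_diff_singleton, Set.insert_eq_self.mpr h₁]
      _ = insert s(w, z) (M₂ \ {s(w, z)}) := by rw [hdiff]
      _ = M₂ := by rw [Set.insert_diff_singleton, Set.insert_eq_self.mpr h₂]
  · exfalso
    have hxy : s(Sum.inr 0, Sum.inr 1) ∈ psiPath3 w z M₂ :=
      (psiPath3_neg h₂) ▸ Set.mem_union_right _ rfl
    rw [← h, psiPath3_pos h₁] at hxy
    rcases hxy with ⟨e', _, he⟩ | he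
    · exact map_inl_ne_xy e' he
    · simp [Sym2.eq_iff] at he
  · exfalso
    have hxy : s(Sum.inr 0, Sum.inr 1) ∈ psiPath3 w z M₁ :=
      (psiPath3_neg h₁) ▸ Set.mem_union_right _ rfl
    rw [h, psiPath3_pos h₂] at hxy
    rcases hxy with ⟨e', _, he⟩ | he
    · exact map_inl_ne_xy e' he
    · simp [Sym2.eq_iff] at he
  · rw [psiPath3_neg h₁, psiPath3_neg h₂] at h
    have hd : ∀ S : Set (Sym2 V), Disjoint (Sym2.map (Sum.inl : V → V ⊕ Fin 2) '' S)
        {s(Sum.inr 0, Sum.inr 1)} := by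
      intro S
      rw [Set.disjoint_left]
      rintro e ⟨e', _, rfl⟩ he
      exact map_inl_ne_xy e' he
    exact Set.image_injective.mpr hinj (union_pair_cancel h (hd _) (hd _))

lemma N_edge_cases {N : Set (Sym2 (V ⊕ Fin 2))}
    (hsub : N ⊆ (replaceEdgeByPath3 H w z).edgeSet) {f} (hf : f ∈ N) :
    (∃ e', e' ∈ H.edgeSet ∧ e' ≠ s(w, z) ∧ f = Sym2.map Sum.inl e') ∨
    f = s(Sum.inl w, Sum.inr 0) ∨ f = s(Sum.inr 0, Sum.inr 1) ∨
    f = s(Sum.inr 1, Sum.inl z) := by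
  have := (rep_edge_iff f).mp (hsub hf)
  rcases this with ⟨a', b', hadj, hne, rfl⟩ | h
  · exact Or.inl ⟨s(a', b'), H.mem_edgeSet.mpr hadj, hne, by simp [Sym2.map_pair_eq]⟩
  · exact Or.inr h

lemma psi_surj (hwz : H.Adj w z) {N : Set (Sym2 (V ⊕ Fin 2))}
    (hN : IsPerfMatching (replaceEdgeByPath3 H w z) N) :
    ∃ M, IsPerfMatching H M ∧ psiPath3 w z M = N := by
  obtain ⟨hsub, huniq⟩ := hN
  set P : Set (Sym2 V) := {e | Sym2.map Sum.inl e ∈ N} with hP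
  have hmemP : ∀ e : Sym2 V, e ∈ P ↔ Sym2.map Sum.inl e ∈ N := fun e => Iff.rfl
  have hPsub : P ⊆ H.edgeSet := by
    intro e he
    rcases N_edge_cases hsub ((hmemP e).mp he) with ⟨e', he', _, hmap⟩ | h | h | h
    · rw [Sym2.map.injective Sum.inl_injective hmap]; exact he'
    · exact absurd h (map_inl_ne_wx e)
    · exact absurd h (map_inl_ne_xy e)
    · exact absurd h (map_inl_ne_yz e)
  have hwzP : s(w, z) ∉ P := by
    intro hmem
    rcases N_edge_cases hsub ((hmemP _).mp hmem) with ⟨e', _, hne, hmap⟩ | h | h | h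
    · exact hne (Sym2.map.injective Sum.inl_injective hmap).symm
    · exact map_inl_ne_wx _ h
    · exact map_inl_ne_xy _ h
    · exact map_inl_ne_yz _ h
  obtain ⟨e₀, ⟨he₀N, h0e₀⟩, hu₀⟩ := huniq (Sum.inr 0)
  have he₀ : e₀ = s(Sum.inl w, Sum.inr 0) ∨ e₀ = s(Sum.inr 0, Sum.inr 1) := by
    rcases N_edge_cases hsub he₀N with ⟨e', _, _, rfl⟩ | rfl | rfl | rfl
    · exact absurd h0e₀ inr_not_mem_map
    · exact Or.inl rfl
    · exact Or.inr rfl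
    · exfalso; simp only [Sym2.mem_iff] at h0e₀
      rcases h0e₀ with h | h
      · exact absurd (Sum.inr_injective h) (by decide)
      · exact Sum.inr_ne_inl h
  obtain ⟨e₁, ⟨he₁N, h1e₁⟩, hu₁⟩ := huniq (Sum.inr 1)
  have he₁ : e₁ = s(Sum.inr 0, Sum.inr 1) ∨ e₁ = s(Sum.inr 1, Sum.inl z) := by
    rcases N_edge_cases hsub he₁N with ⟨e', _, _, rfl⟩ | rfl | rfl | rfl
    · exact absurd h1e₁ inr_not_mem_map
    · exfalso; simp only [Sym2.mem_iff] at h1e₁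
      rcases h1e₁ with h | h
      · exact Sum.inr_ne_inl h
      · exact absurd (Sum.inr_injective h) (by decide)
    · exact Or.inl rfl
    · exact Or.inr rfl
  rcases he₀ with rfl | rfl
  · -- Case A : w–x ∈ N, so s(w,z) ∈ M
    have hwxN : s(Sum.inl w, Sum.inr 0) ∈ N := he₀N
    have hxyN : s(Sum.inr 0, Sum.inr 1) ∉ N := by
      intro hmem
      have := hu₀ _ ⟨hmem, by simp⟩
      simp [Sym2.eq_iff] at this
    have hyzN : s(Sum.inr 1, Sum.inl z) ∈ N := by
      rcases he₁ with rfl | rfl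
      · exact absurd he₁N hxyN
      · exact he₁N
    refine ⟨insert s(w, z) P, ⟨?_, ?_⟩, ?_⟩
    · rintro e he
      rcases Set.mem_insert_iff.mp he with rfl | heP
      · exact H.mem_edgeSet.mpr hwz
      · exact hPsub heP
    · intro v
      rcases eq_or_ne v w with rfl | hvw
      · refine ⟨s(v, z), ⟨Set.mem_insert _ _, by simp⟩, ?_⟩
        rintro f ⟨hf, hvf⟩
        rcases Set.mem_insert_iff.mp hf with rfl | hfP
        · rfl
        · exfalso
          obtain ⟨g, _, hug⟩ := huniq (Sum.inl v)
          have h1 := hug _ ⟨(hmemP f).mp hfP, mem_map_inl.mpr hvf⟩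
          have h2 := hug _ ⟨hwxN, by simp⟩
          exact map_inl_ne_wx f (h1.trans h2.symm)
      rcases eq_or_ne v z with rfl | hvz
      · refine ⟨s(w, v), ⟨Set.mem_insert _ _, by simp⟩, ?_⟩
        rintro f ⟨hf, hvf⟩
        rcases Set.mem_insert_iff.mp hf with rfl | hfP
        · rfl
        · exfalso
          obtain ⟨g, _, hug⟩ := huniq (Sum.inl v)
          have h1 := hug _ ⟨(hmemP f).mp hfP, mem_map_inl.mpr hvf⟩
          have h2 := hug _ ⟨hyzN, by simp⟩
          exact map_inl_ne_yz f (h1.trans h2.symm)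
      · obtain ⟨f₀, ⟨hf₀N, hvf₀⟩, huf₀⟩ := huniq (Sum.inl v)
        rcases N_edge_cases hsub hf₀N with ⟨e', _, _, rfl⟩ | rfl | rfl | rfl
        · refine ⟨e', ⟨Set.mem_insert_of_mem _ ((hmemP e').mpr hf₀N),
            mem_map_inl.mp hvf₀⟩, ?_⟩
          rintro f ⟨hf, hvf⟩
          rcases Set.mem_insert_iff.mp hf with rfl | hfP
          · exfalso
            simp only [Sym2.mem_iff] at hvf
            tauto
          · exact Sym2.map.injective Sum.inl_injective
              (huf₀ _ ⟨(hmemP f).mp hfP, mem_map_inl.mpr hvf⟩)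
        · exfalso
          simp only [Sym2.mem_iff] at hvf₀
          rcases hvf₀ with h | h
          · exact hvw (Sum.inl_injective h)
          · exact Sum.inl_ne_inr h
        · exfalso
          simp only [Sym2.mem_iff] at hvf₀
          rcases hvf₀ with h | h <;> exact Sum.inl_ne_inr h
        · exfalso
          simp only [Sym2.mem_iff] at hvf₀
          rcases hvf₀ with h | h
          · exact Sum.inl_ne_inr h
          · exact hvz (Sum.inl_injective h)
    · rw [psiPath3_pos (Set.mem_insert _ _),
        Set.insert_diff_self_of_notMem hwzP]
      ext f
      constructor
      · rintro (⟨e', he', rfl⟩ | hf)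
        · exact (hmemP e').mp he'
        · rcases Set.mem_insert_iff.mp hf with rfl | hf
          · exact hwxN
          · rw [Set.mem_singleton_iff] at hf
            exact hf ▸ hyzN
      · intro hfN
        rcases N_edge_cases hsub hfN with ⟨e', _, _, rfl⟩ | rfl | rfl | rfl
        · exact Set.mem_union_left _ ⟨e', (hmemP e').mpr hfN, rfl⟩
        · exact Set.mem_union_right _ (by simp)
        · exact absurd hfN hxyN
        · exact Set.mem_union_right _ (by simp)
  · -- Case B : x–y ∈ N, so s(w,z) ∉ M
    have hxyN : s(Sum.inr 0, Sum.inr 1) ∈ N := he₀N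
    have hwxN : s(Sum.inl w, Sum.inr 0) ∉ N := by
      intro hmem
      have := hu₀ _ ⟨hmem, by simp⟩
      simp [Sym2.eq_iff] at this
    have hyzN : s(Sum.inr 1, Sum.inl z) ∉ N := by
      intro hmem
      have h1 := hu₁ _ ⟨hmem, by simp⟩
      have h2 := hu₁ _ ⟨hxyN, by simp⟩
      have h3 := h1.trans h2.symm
      simp [Sym2.eq_iff] at h3
    refine ⟨P, ⟨hPsub, ?_⟩, ?_⟩
    · intro v
      obtain ⟨f₀, ⟨hf₀N, hvf₀⟩, huf₀⟩ := huniq (Sum.inl v)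
      rcases N_edge_cases hsub hf₀N with ⟨e', _, _, rfl⟩ | rfl | rfl | rfl
      · refine ⟨e', ⟨(hmemP e').mpr hf₀N, mem_map_inl.mp hvf₀⟩, ?_⟩
        rintro f ⟨hfP, hvf⟩
        exact Sym2.map.injective Sum.inl_injective
          (huf₀ _ ⟨(hmemP f).mp hfP, mem_map_inl.mpr hvf⟩)
      · exact absurd hf₀N hwxN
      · exfalso
        simp only [Sym2.mem_iff] at hvf₀
        rcases hvf₀ with h | h <;> exact Sum.inl_ne_inr h
      · exact absurd hf₀N hyzN
    · rw [psiPath3_neg hwzP]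
      ext f
      constructor
      · rintro (⟨e', he', rfl⟩ | hf)
        · exact (hmemP e').mp he'
        · rw [Set.mem_singleton_iff] at hf
          exact hf ▸ hxyN
      · intro hfN
        rcases N_edge_cases hsub hfN with ⟨e', _, _, rfl⟩ | rfl | rfl | rfl
        · exact Set.mem_union_left _ ⟨e', (hmemP e').mpr hfN, rfl⟩
        · exact absurd hfN hwxN
        · exact Set.mem_union_right _ rfl
        · exact absurd hfN hyzN

end PsiHelpers

/-- Let `G` be obtained from `H` by replacing the edge `wz` by a path `w–x–y–z` of
length 3 (with new vertices `x, y`). Then `ψ` is a bijection from `𝔐(H)` onto `𝔐(G)`;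
in particular `|𝔐(G)| = |𝔐(H)|`. -/
theorem bijOn_psiPath3 {V : Type} [Fintype V] (H : SimpleGraph V) (w z : V)
    (hwz : H.Adj w z) :
    Set.BijOn (psiPath3 w z)
      {M | IsPerfMatching H M}
      {M | IsPerfMatching (replaceEdgeByPath3 H w z) M} ∧
    numPM (replaceEdgeByPath3 H w z) = numPM H := by
  have hbij : Set.BijOn (psiPath3 w z) {M | IsPerfMatching H M}
      {M | IsPerfMatching (replaceEdgeByPath3 H w z) M} := by
    refine ⟨fun M hM => psi_isPM hwz hM, fun M₁ _ M₂ _ h => psiPath3_inj hwz.ne h, ?_⟩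
    intro N hN
    obtain ⟨M, hM, hpsi⟩ := psi_surj hwz hN
    exact ⟨M, hM, hpsi⟩
  refine ⟨hbij, ?_⟩
  rw [numPM, numPM, ← hbij.image_eq, Set.ncard_image_of_injOn hbij.injOn]
end

section
/- Let k ≥ 1, let G be a minimally (k+1)-matchable graph, and let H be a spanning subgraph of G that is minimally k-matchable. Then every edge e ∈ E(G) \ E(H) is contained in every perfect matching N ∈ 𝔐(G) \ 𝔐(H), i.e., every perfect matching of G that is not a perfect matching of H contains all edges of E(G) \ E(H). -/
open SimpleGraph

/-- **Claim 1 (first part).** Let `G` be minimally `(k+1)`-matchable and `H` a spanning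
minimally `k`-matchable subgraph of `G`. Then every perfect matching of `G` that is not a
perfect matching of `H` contains all edges of `E(G) \ E(H)`. -/
theorem new_matchings_contain_new_edges (k : ℕ) (hk : 1 ≤ k) {V : Type} [Fintype V]
    (G H : SimpleGraph V) (hHG : H ≤ G)
    (hG : MinMatchable (k + 1) G) (hH : MinMatchable k H) :
    ∀ N : Set (Sym2 V), IsPerfMatching G N → ¬ IsPerfMatching H N →
      ∀ e ∈ G.edgeSet \ H.edgeSet, e ∈ N := by
  intro N hN hNH e he
  by_contra heN
  set G' := G.deleteEdges {e} with hG'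
  have hG'edge : G'.edgeSet = G.edgeSet \ {e} := SimpleGraph.edgeSet_deleteEdges {e}
  have hNG' : IsPerfMatching G' N := by
    refine ⟨?_, hN.2⟩
    intro f hf
    rw [hG'edge]
    exact ⟨hN.1 hf, fun h => heN (h ▸ hf)⟩
  have hsub : insert N {M : Set (Sym2 V) | IsPerfMatching H M} ⊆
      {M | IsPerfMatching G' M} := by
    intro M hM
    rcases hM with rfl | hM
    · exact hNG'
    · refine ⟨?_, hM.2⟩
      intro f hf
      rw [hG'edge]
      refine ⟨SimpleGraph.edgeSet_mono hHG (hM.1 hf), ?_⟩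
      intro h
      exact he.2 (h ▸ hM.1 hf)
  have hNmem : N ∉ {M : Set (Sym2 V) | IsPerfMatching H M} := hNH
  have h1 : k + 1 ≤ (insert N {M : Set (Sym2 V) | IsPerfMatching H M}).ncard := by
    rw [Set.ncard_insert_of_notMem hNmem (Set.toFinite _)]
    exact Nat.add_le_add_right hH.1 1
  exact hG.2 e he.1 (le_trans h1 (Set.ncard_le_ncard hsub (Set.toFinite _)))
end

section
/- Let k ≥ 1, let G be a minimally (k+1)-matchable graph, and let H be a spanning subgraph of G that is minimally k-matchable. If E(G) \ E(H) is nonempty, then E(G) \ E(H) is contained in some perfect matching of G; in particular, E(G) \ E(H) is a matching of G (no two of its edges share an endvertex). -/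
open SimpleGraph

/-- **Claim 1 (second part).** Let `G` be minimally `(k+1)`-matchable and `H` a spanning
minimally `k`-matchable subgraph of `G`. If `E(G) \ E(H)` is nonempty, then it is contained
in some perfect matching of `G`; in particular `E(G) \ E(H)` is a matching of `G`
(no two of its edges share an endvertex). -/
theorem new_edges_form_matching (k : ℕ) (hk : 1 ≤ k) {V : Type} [Fintype V]
    (G H : SimpleGraph V) (hHG : H ≤ G)
    (hG : MinMatchable (k + 1) G) (hH : MinMatchable k H)
    (hne : (G.edgeSet \ H.edgeSet).Nonempty) :
    (∃ M : Set (Sym2 V), IsPerfMatching G M ∧ G.edgeSet \ H.edgeSet ⊆ M) ∧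
    (∀ e ∈ G.edgeSet \ H.edgeSet, ∀ f ∈ G.edgeSet \ H.edgeSet, e ≠ f →
      ∀ v : V, ¬ (v ∈ e ∧ v ∈ f)) := by

  classical
  -- For each new edge `e`, the perfect matchings of `G - e` are exactly those of `H`.
  have key : ∀ e ∈ G.edgeSet \ H.edgeSet,
      {M : Set (Sym2 V) | IsPerfMatching H M}
        = {M : Set (Sym2 V) | IsPerfMatching (G.deleteEdges {e}) M} := by
    intro e he
    have hle : H ≤ G.deleteEdges {e} := by
      intro u v huv
      rw [SimpleGraph.deleteEdges_adj]
      refine ⟨hHG huv, ?_⟩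
      simp only [Set.mem_singleton_iff]
      intro h
      exact he.2 (h ▸ (H.mem_edgeSet.mpr huv))
    have hsub : {M : Set (Sym2 V) | IsPerfMatching H M}
        ⊆ {M : Set (Sym2 V) | IsPerfMatching (G.deleteEdges {e}) M} := by
      intro M hM
      exact ⟨hM.1.trans (SimpleGraph.edgeSet_mono hle), hM.2⟩
    have hcard : numPM (G.deleteEdges {e}) ≤ k := by
      have := hG.2 e he.1
      unfold Matchable numPM at this
      unfold numPM
      omega
    exact Set.eq_of_subset_of_ncard_le hsub (hcard.trans hH.1) (Set.toFinite _)
  obtain ⟨e0, he0⟩ := hne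
  have hHk : numPM H ≤ k := by
    have := key e0 he0
    unfold numPM
    rw [this]
    have h2 := hG.2 e0 he0.1
    unfold Matchable numPM at h2
    omega
  -- There is a perfect matching of `G` that is not a perfect matching of `H`.
  have hex : ∃ M : Set (Sym2 V), IsPerfMatching G M ∧ ¬ IsPerfMatching H M := by
    by_contra hcon
    push_neg at hcon
    have hsub : {M : Set (Sym2 V) | IsPerfMatching G M}
        ⊆ {M : Set (Sym2 V) | IsPerfMatching H M} := fun M hM => hcon M hM
    have := Set.ncard_le_ncard hsub (Set.toFinite _)
    have hG1 : k + 1 ≤ numPM G := hG.1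
    unfold numPM at hG1 hHk
    omega
  obtain ⟨M, hM, hMH⟩ := hex
  have hdiff : G.edgeSet \ H.edgeSet ⊆ M := by
    intro e he
    by_contra heM
    have hMde : IsPerfMatching (G.deleteEdges {e}) M := by
      refine ⟨?_, hM.2⟩
      intro f hf
      rw [SimpleGraph.edgeSet_deleteEdges]
      exact ⟨hM.1 hf, by rintro rfl; exact heM hf⟩
    have : IsPerfMatching H M := by
      have hk := key e he
      have : M ∈ {M : Set (Sym2 V) | IsPerfMatching H M} := by
        rw [hk]; exact hMde
      exact this
    exact hMH this
  refine ⟨⟨M, hM, hdiff⟩, ?_⟩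
  intro e he f hf hef v ⟨hve, hvf⟩
  obtain ⟨g, _, hg⟩ := hM.2 v
  have h1 := hg e ⟨hdiff he, hve⟩
  have h2 := hg f ⟨hdiff hf, hvf⟩
  exact hef (h1.trans h2.symm)
end

section
/- Let k ≥ 1, let G be a minimally (k+1)-matchable graph, and let H be a spanning subgraph of G that is minimally k-matchable. Then every perfect matching of G contains either all edges of E(G) \ E(H) or none of them; in other words, no perfect matching of G contains at least one but not all edges of E(G) \ E(H). -/
open SimpleGraph

/-- **Claim 1 (third part).** Let `G` be minimally `(k+1)`-matchable and `H` a spanning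
minimally `k`-matchable subgraph of `G`. Then every perfect matching of `G` contains either
all edges of `E(G) \ E(H)` or none of them. -/
theorem all_or_none_new_edges (k : ℕ) (hk : 1 ≤ k) {V : Type} [Fintype V]
    (G H : SimpleGraph V) (hHG : H ≤ G)
    (hG : MinMatchable (k + 1) G) (hH : MinMatchable k H) :
    ∀ M : Set (Sym2 V), IsPerfMatching G M →
      (G.edgeSet \ H.edgeSet ⊆ M) ∨ (∀ e ∈ G.edgeSet \ H.edgeSet, e ∉ M) := by
  intro M hM
  by_cases hall : G.edgeSet \ H.edgeSet ⊆ M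
  · exact Or.inl hall
  · right
    rw [Set.not_subset] at hall
    obtain ⟨d, hdD, hdM⟩ := hall
    -- M is a perfect matching of G − d
    have hMGd : IsPerfMatching (G.deleteEdges {d}) M := by
      refine ⟨?_, hM.2⟩
      intro e he
      rw [SimpleGraph.edgeSet_deleteEdges]
      refine ⟨hM.1 he, ?_⟩
      simp only [Set.mem_singleton_iff]
      rintro rfl; exact hdM he
    -- 𝔐(H) ⊆ 𝔐(G − d)
    have hsub : {N : Set (Sym2 V) | IsPerfMatching H N}
        ⊆ {N : Set (Sym2 V) | IsPerfMatching (G.deleteEdges {d}) N} := by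
      intro N hN
      refine ⟨?_, hN.2⟩
      intro e he
      rw [SimpleGraph.edgeSet_deleteEdges]
      refine ⟨SimpleGraph.edgeSet_mono hHG (hN.1 he), ?_⟩
      simp only [Set.mem_singleton_iff]
      rintro rfl; exact hdD.2 (hN.1 he)
    -- cardinalities force equality
    have hle : numPM (G.deleteEdges {d}) ≤ k := by
      have := hG.2 d hdD.1
      unfold Matchable at this
      omega
    have hk' : k ≤ numPM H := hH.1
    have heq : {N : Set (Sym2 V) | IsPerfMatching H N}
        = {N : Set (Sym2 V) | IsPerfMatching (G.deleteEdges {d}) N} :=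
      Set.eq_of_subset_of_ncard_le hsub (le_trans hle hk') (Set.toFinite _)
    have hMH : IsPerfMatching H M := by
      have : M ∈ {N : Set (Sym2 V) | IsPerfMatching (G.deleteEdges {d}) N} := hMGd
      rw [← heq] at this
      exact this
    intro e heD heM
    exact heD.2 (hMH.1 heM)
end
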